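/- For every integer m ≥ 1 there exist a normal matrix D ∈ M_{2m}(ℂ) and an orthogonal projection P ∈ M_{2m}(ℂ) of rank m such that rank((I−P)DP) = 1 and rank(PD(I−P)) = m. -/

import Mathlib

open Matrix

noncomputable section NormalCornersAux

namespace NormalCornersAux

def sg : ℝ := Real.sqrt 2

lemma sg_pos : 0 < sg := Real.sqrt_pos.mpr (by norm_num)

lemma sg_sq : sg * sg = 2 := Real.mul_self_sqrt (by norm_num)

lemma sg_pow_mul_self (k : ℕ) : sg ^ k * sg ^ k = 2 ^ k := by
  rw [← mul_pow, sg_sq]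

def w (m : ℕ) (j : Fin m) : ℝ := Real.sqrt (2 ^ (m - 1) - 2 ^ (j : ℕ))

lemma two_pow_le (m : ℕ) (j : Fin m) : (2 : ℝ) ^ (j : ℕ) ≤ 2 ^ (m - 1) := by
  apply pow_le_pow_right₀ (by norm_num)
  have := j.isLt; omega

lemma w_sq (m : ℕ) (j : Fin m) : w m j * w m j = 2 ^ (m - 1) - 2 ^ (j : ℕ) :=
  Real.mul_self_sqrt (by linarith [two_pow_le m j])

def S (m : ℕ) : Matrix (Fin m) (Fin m) ℝ :=
  of fun i j => if (i : ℕ) = (j : ℕ) + 1 then w m j else 0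

lemma S_apply_pos (m : ℕ) (i j : Fin m) (h : (i : ℕ) = (j : ℕ) + 1) :
    S m i j = w m j := if_pos h

lemma S_apply_neg (m : ℕ) (i j : Fin m) (h : ¬ (i : ℕ) = (j : ℕ) + 1) :
    S m i j = 0 := if_neg h

def β (m : ℕ) : Fin m → ℝ := fun i =>
  if (i : ℕ) = 0 then sg + sg ^ (m - 1) else sg ^ ((i : ℕ) - 1)

def γ (m : ℕ) : Fin m → ℝ := fun i => if (i : ℕ) = 0 then sg ^ m + 1 else 0

lemma β_pos (m : ℕ) (i : Fin m) : 0 < β m i := by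
  unfold β
  split
  · exact add_pos sg_pos (pow_pos sg_pos _)
  · exact pow_pos sg_pos _

def fSST (m : ℕ) : Fin m → ℝ := fun i =>
  if (i : ℕ) = 0 then 0 else 2 ^ (m - 1) - 2 ^ ((i : ℕ) - 1)

def fSTS (m : ℕ) : Fin m → ℝ := fun j => 2 ^ (m - 1) - 2 ^ (j : ℕ)

lemma S_mul_St (m : ℕ) : S m * (S m)ᵀ = diagonal (fSST m) := by
  ext i j
  rw [mul_apply]
  by_cases hij : i = j
  · subst hij
    rw [diagonal_apply_eq]
    by_cases h0 : (i : ℕ) = 0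
    · rw [Finset.sum_eq_zero, fSST, if_pos h0]
      intro k _
      rw [transpose_apply, S_apply_neg m i k (by omega), zero_mul]
    · have hlt : (i : ℕ) - 1 < m := by have := i.isLt; omega
      rw [Finset.sum_eq_single (⟨(i : ℕ) - 1, hlt⟩ : Fin m)]
      · rw [transpose_apply, S_apply_pos m i _ (by simp only [Fin.val_mk]; omega), w_sq]
        simp only [fSST, if_neg h0, Fin.val_mk]
      · intro k _ hk
        have hv : (k : ℕ) ≠ (i : ℕ) - 1 := by
          intro hc; exact hk (Fin.ext (by simp only [Fin.val_mk]; omega))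
        rw [transpose_apply, S_apply_neg m i k (by omega), zero_mul]
      · intro h; exact absurd (Finset.mem_univ _) h
  · have hv : (i : ℕ) ≠ (j : ℕ) := fun hc => hij (Fin.ext hc)
    rw [diagonal_apply_ne _ hij, Finset.sum_eq_zero]
    intro k _
    by_cases h1 : (i : ℕ) = (k : ℕ) + 1
    · rw [transpose_apply, S_apply_neg m j k (by omega), mul_zero]
    · rw [S_apply_neg m i k h1, zero_mul]

lemma St_mul_S (m : ℕ) : (S m)ᵀ * S m = diagonal (fSTS m) := by
  ext i j
  rw [mul_apply]
  by_cases hij : i = j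
  · subst hij
    rw [diagonal_apply_eq]
    by_cases hlast : (i : ℕ) + 1 < m
    · rw [Finset.sum_eq_single (⟨(i : ℕ) + 1, hlast⟩ : Fin m)]
      · rw [transpose_apply, S_apply_pos m _ i (by simp only [Fin.val_mk]), w_sq]
        rfl
      · intro k _ hk
        have hv : (k : ℕ) ≠ (i : ℕ) + 1 := by
          intro hc; exact hk (Fin.ext (by simp only [Fin.val_mk]; omega))
        rw [transpose_apply, S_apply_neg m k i hv, zero_mul]
      · intro h; exact absurd (Finset.mem_univ _) h
    · have hi : (i : ℕ) = m - 1 := by have := i.isLt; omega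
      rw [Finset.sum_eq_zero]
      · simp only [fSTS, hi]; ring
      · intro k _
        have hv : ¬ (k : ℕ) = (i : ℕ) + 1 := by have := k.isLt; omega
        rw [transpose_apply, S_apply_neg m k i hv, zero_mul]
  · have hv : (i : ℕ) ≠ (j : ℕ) := fun hc => hij (Fin.ext hc)
    rw [diagonal_apply_ne _ hij, Finset.sum_eq_zero]
    intro k _
    simp only [transpose_apply]
    by_cases h1 : (k : ℕ) = (i : ℕ) + 1
    · rw [S_apply_neg m k j (by omega), mul_zero]
    · rw [S_apply_neg m k i h1, zero_mul]

lemma keyscalar (m : ℕ) (i : Fin m) :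
    fSTS m i + β m i * β m i = fSST m i + γ m i * γ m i := by
  have hm : 1 ≤ m := i.pos
  have hsg := sg_sq
  have h1 : sg ^ (m - 1) * sg ^ (m - 1) = 2 ^ (m - 1) := sg_pow_mul_self _
  have h2 : sg ^ m * sg ^ m = 2 ^ m := sg_pow_mul_self _
  have h3 : sg * sg ^ (m - 1) = sg ^ m := by
    rw [← pow_succ']; congr 1; omega
  have h4 : (2 : ℝ) ^ m = 2 * 2 ^ (m - 1) := by
    rw [← pow_succ']; congr 1; omega
  by_cases h0 : (i : ℕ) = 0
  · have e1 : fSTS m i = 2 ^ (m - 1) - 1 := by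
      simp only [fSTS, h0, pow_zero]
    have e2 : fSST m i = 0 := if_pos h0
    have e3 : β m i = sg + sg ^ (m - 1) := if_pos h0
    have e4 : γ m i = sg ^ m + 1 := if_pos h0
    rw [e1, e2, e3, e4]
    linear_combination hsg + 2 * h3 + h1 - h2 - h4
  · have h5 : sg ^ ((i : ℕ) - 1) * sg ^ ((i : ℕ) - 1) = 2 ^ ((i : ℕ) - 1) :=
      sg_pow_mul_self _
    have h6 : (2 : ℝ) ^ (i : ℕ) = 2 * 2 ^ ((i : ℕ) - 1) := by
      rw [← pow_succ']; congr 1; omega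
    have e1 : fSST m i = 2 ^ (m - 1) - 2 ^ ((i : ℕ) - 1) := if_neg h0
    have e3 : β m i = sg ^ ((i : ℕ) - 1) := if_neg h0
    have e4 : γ m i = 0 := if_neg h0
    rw [e1, e3, e4, fSTS]
    linear_combination h5 - h6

lemma keydiag (m : ℕ) :
    diagonal (fSTS m) + diagonal (fun i => β m i * β m i) =
      diagonal (fSST m) + diagonal (fun i => γ m i * γ m i) := by
  rw [diagonal_add, diagonal_add]
  exact congrArg _ (funext fun i => keyscalar m i)

def A (m : ℕ) : Matrix (Fin m) (Fin m) ℝ := S m + sg • (S m)ᵀ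
def A' (m : ℕ) : Matrix (Fin m) (Fin m) ℝ := sg • S m + (S m)ᵀ
def B (m : ℕ) : Matrix (Fin m) (Fin m) ℝ := diagonal (β m)
def C (m : ℕ) : Matrix (Fin m) (Fin m) ℝ := diagonal (γ m)

lemma Eq1 (m : ℕ) : A m * (A m)ᵀ + B m * (B m)ᵀ = (A m)ᵀ * A m + (C m)ᵀ * C m := by
  have hA : A m * (A m)ᵀ =
      S m * (S m)ᵀ + (2 : ℝ) • ((S m)ᵀ * S m) +
        (sg • (S m * S m) + sg • ((S m)ᵀ * (S m)ᵀ)) := by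
    simp only [A, transpose_add, transpose_smul, transpose_transpose, add_mul, mul_add,
      smul_add, smul_mul_assoc, mul_smul_comm, smul_smul, sg_sq]
    module
  have hAt : (A m)ᵀ * A m =
      (S m)ᵀ * S m + (2 : ℝ) • (S m * (S m)ᵀ) +
        (sg • (S m * S m) + sg • ((S m)ᵀ * (S m)ᵀ)) := by
    simp only [A, transpose_add, transpose_smul, transpose_transpose, add_mul, mul_add,
      smul_add, smul_mul_assoc, mul_smul_comm, smul_smul, sg_sq]
    module
  have hB : B m * (B m)ᵀ = diagonal (fun i => β m i * β m i) := by
    rw [B, diagonal_transpose, diagonal_mul_diagonal]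
  have hC : (C m)ᵀ * C m = diagonal (fun i => γ m i * γ m i) := by
    rw [C, diagonal_transpose, diagonal_mul_diagonal]
  rw [hA, hAt, hB, hC, S_mul_St, St_mul_S]
  have k2 : diagonal (fun i => β m i * β m i) =
      diagonal (fSST m) + diagonal (fun i => γ m i * γ m i) - diagonal (fSTS m) := by
    rw [← keydiag]; abel
  rw [k2]; module

lemma Eq3 (m : ℕ) : C m * (C m)ᵀ + A' m * (A' m)ᵀ = (B m)ᵀ * B m + (A' m)ᵀ * A' m := by
  have hA : A' m * (A' m)ᵀ =
      (2 : ℝ) • (S m * (S m)ᵀ) + (S m)ᵀ * S m +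
        (sg • (S m * S m) + sg • ((S m)ᵀ * (S m)ᵀ)) := by
    simp only [A', transpose_add, transpose_smul, transpose_transpose, add_mul, mul_add,
      smul_add, smul_mul_assoc, mul_smul_comm, smul_smul, sg_sq]
    module
  have hAt : (A' m)ᵀ * A' m =
      (2 : ℝ) • ((S m)ᵀ * S m) + S m * (S m)ᵀ +
        (sg • (S m * S m) + sg • ((S m)ᵀ * (S m)ᵀ)) := by
    simp only [A', transpose_add, transpose_smul, transpose_transpose, add_mul, mul_add,
      smul_add, smul_mul_assoc, mul_smul_comm, smul_smul, sg_sq]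
    module
  have hB : (B m)ᵀ * B m = diagonal (fun i => β m i * β m i) := by
    rw [B, diagonal_transpose, diagonal_mul_diagonal]
  have hC : C m * (C m)ᵀ = diagonal (fun i => γ m i * γ m i) := by
    rw [C, diagonal_transpose, diagonal_mul_diagonal]
  rw [hA, hAt, hB, hC, S_mul_St, St_mul_S]
  have k2 : diagonal (fun i => γ m i * γ m i) =
      diagonal (fSTS m) + diagonal (fun i => β m i * β m i) - diagonal (fSST m) := by
    rw [keydiag]; abel
  rw [k2]; module

lemma Eq2 (m : ℕ) : A m * (C m)ᵀ + B m * (A' m)ᵀ = (A m)ᵀ * B m + (C m)ᵀ * A' m := by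
  ext i j
  simp only [A, A', B, C, diagonal_transpose, transpose_add, transpose_smul,
    transpose_transpose, add_mul, mul_add, Matrix.add_apply, Matrix.smul_apply, mul_diagonal,
    diagonal_mul, smul_mul_assoc, mul_smul_comm, smul_eq_mul, transpose_apply]
  have hm : 1 ≤ m := i.pos
  by_cases hij : (i : ℕ) = (j : ℕ) + 1
  · have hji : ¬ ((j : ℕ) = (i : ℕ) + 1) := by omega
    have hi0 : ¬ ((i : ℕ) = 0) := by omega
    rw [S_apply_pos m i j hij, S_apply_neg m j i hji]
    have hγi : γ m i = 0 := if_neg hi0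
    have hβi : β m i = sg ^ ((i : ℕ) - 1) := if_neg hi0
    rw [hγi, hβi]
    by_cases hj0 : (j : ℕ) = 0
    · have hγj : γ m j = sg ^ m + 1 := if_pos hj0
      have hβj : β m j = sg + sg ^ (m - 1) := if_pos hj0
      have hi1 : (i : ℕ) - 1 = 0 := by omega
      rw [hγj, hβj, hi1, pow_zero]
      have h3 : sg * sg ^ (m - 1) = sg ^ m := by
        rw [← pow_succ']; congr 1; omega
      linear_combination (-(w m j)) * h3 - (w m j) * sg_sq
    · have hγj : γ m j = 0 := if_neg hj0
      have hβj : β m j = sg ^ ((j : ℕ) - 1) := if_neg hj0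
      rw [hγj, hβj]
      have h3 : sg * sg ^ ((j : ℕ) - 1) = sg ^ ((i : ℕ) - 1) := by
        rw [← pow_succ']; congr 1; omega
      linear_combination (-(w m j)) * h3
  · by_cases hji : (j : ℕ) = (i : ℕ) + 1
    · have hj0 : ¬ ((j : ℕ) = 0) := by omega
      rw [S_apply_pos m j i hji, S_apply_neg m i j hij]
      have hγj : γ m j = 0 := if_neg hj0
      have hβj : β m j = sg ^ ((j : ℕ) - 1) := if_neg hj0
      rw [hγj, hβj]
      by_cases hi0 : (i : ℕ) = 0
      · have hγi : γ m i = sg ^ m + 1 := if_pos hi0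
        have hβi : β m i = sg + sg ^ (m - 1) := if_pos hi0
        have hj1 : (j : ℕ) - 1 = 0 := by omega
        rw [hγi, hβi, hj1, pow_zero]
        have h3 : sg * sg ^ (m - 1) = sg ^ m := by
          rw [← pow_succ']; congr 1; omega
        linear_combination (w m i) * sg_sq + (w m i) * h3
      · have hγi : γ m i = 0 := if_neg hi0
        have hβi : β m i = sg ^ ((i : ℕ) - 1) := if_neg hi0
        rw [hγi, hβi]
        have h3 : sg * sg ^ ((i : ℕ) - 1) = sg ^ ((j : ℕ) - 1) := by
          rw [← pow_succ']; congr 1; omega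
        linear_combination (w m i) * h3
    · rw [S_apply_neg m i j hij, S_apply_neg m j i hji]
      ring

lemma Eq2t (m : ℕ) : C m * (A m)ᵀ + A' m * (B m)ᵀ = (B m)ᵀ * A m + (A' m)ᵀ * C m := by
  have h := congrArg transpose (Eq2 m)
  simpa only [transpose_add, transpose_mul, transpose_transpose] using h

def Dr (m : ℕ) : Matrix (Fin m ⊕ Fin m) (Fin m ⊕ Fin m) ℝ :=
  fromBlocks (A m) (B m) (C m) (A' m)

lemma normal_r (m : ℕ) : Dr m * (Dr m)ᵀ = (Dr m)ᵀ * Dr m := by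
  rw [Dr, fromBlocks_transpose, fromBlocks_multiply, fromBlocks_multiply]
  rw [Eq1, Eq2, Eq2t, Eq3]


open scoped ComplexOrder

def Dc (m : ℕ) : Matrix (Fin m ⊕ Fin m) (Fin m ⊕ Fin m) ℂ :=
  (Dr m).map Complex.ofRealHom

def Pc (m : ℕ) : Matrix (Fin m ⊕ Fin m) (Fin m ⊕ Fin m) ℂ := fromBlocks 1 0 0 0

lemma map_conjT {n : Type*} (M : Matrix n n ℝ) :
    (M.map Complex.ofRealHom)ᴴ = Mᵀ.map Complex.ofRealHom := by
  ext i j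
  simp [conjTranspose_apply, Matrix.map_apply, Complex.conj_ofReal]

lemma normal_c (m : ℕ) : Dc m * (Dc m)ᴴ = (Dc m)ᴴ * Dc m := by
  rw [Dc, map_conjT, ← Matrix.map_mul, ← Matrix.map_mul, normal_r]

lemma Pc_proj (m : ℕ) : Pc m * Pc m = Pc m := by
  rw [Pc, fromBlocks_multiply]
  simp

lemma Pc_herm (m : ℕ) : (Pc m)ᴴ = Pc m := by
  rw [Pc, fromBlocks_conjTranspose]
  simp

lemma card_left (m : ℕ) (g : Fin m → ℂ) (hg : ∀ a, g a ≠ 0) :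
    Fintype.card {x : Fin m ⊕ Fin m // Sum.elim g (0 : Fin m → ℂ) x ≠ 0} = m := by
  rw [Fintype.card_congr (Equiv.subtypeSum)]
  rw [Fintype.card_sum]
  have h1 : Fintype.card {a : Fin m // Sum.elim g (0 : Fin m → ℂ) (Sum.inl a) ≠ 0} = m := by
    rw [Fintype.card_congr (Equiv.subtypeUnivEquiv (fun a => by simpa using hg a))]
    simp
  have h2 : Fintype.card {b : Fin m // Sum.elim g (0 : Fin m → ℂ) (Sum.inr b) ≠ 0} = 0 := by
    rw [Fintype.card_eq_zero_iff]
    exact ⟨fun x => x.2 (by simp)⟩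
  omega

lemma Pc_rank (m : ℕ) : (Pc m).rank = m := by
  have : Pc m = diagonal (Sum.elim (fun _ : Fin m => (1 : ℂ)) (fun _ : Fin m => (0 : ℂ))) := by
    rw [← fromBlocks_diagonal, Pc, diagonal_one, diagonal_zero]
  rw [this, rank_diagonal]
  exact card_left m _ (fun a => one_ne_zero)

lemma Dc_blocks (m : ℕ) : Dc m = fromBlocks ((A m).map Complex.ofRealHom)
    ((B m).map Complex.ofRealHom) ((C m).map Complex.ofRealHom)
    ((A' m).map Complex.ofRealHom) := by
  rw [Dc, Dr, fromBlocks_map]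

lemma one_sub_Pc (m : ℕ) : (1 : Matrix (Fin m ⊕ Fin m) (Fin m ⊕ Fin m) ℂ) - Pc m =
    fromBlocks 0 0 0 1 := by
  rw [sub_eq_iff_eq_add, Pc, fromBlocks_add, ← fromBlocks_one]
  norm_num

lemma Bc_diag (m : ℕ) : (B m).map Complex.ofRealHom = diagonal (fun i => (β m i : ℂ)) := by
  rw [B, diagonal_map (by simp)]
  rfl

lemma Cc_diag (m : ℕ) : (C m).map Complex.ofRealHom = diagonal (fun i => (γ m i : ℂ)) := by
  rw [C, diagonal_map (by simp)]
  rfl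

lemma cornerL (m : ℕ) :
    ((1 : Matrix (Fin m ⊕ Fin m) (Fin m ⊕ Fin m) ℂ) - Pc m) * Dc m * Pc m =
      fromBlocks 0 0 ((C m).map Complex.ofRealHom) 0 := by
  rw [one_sub_Pc, Dc_blocks, Pc, fromBlocks_multiply, fromBlocks_multiply]
  simp

lemma cornerR (m : ℕ) :
    Pc m * Dc m * ((1 : Matrix (Fin m ⊕ Fin m) (Fin m ⊕ Fin m) ℂ) - Pc m) =
      fromBlocks 0 ((B m).map Complex.ofRealHom) 0 0 := by
  rw [one_sub_Pc, Dc_blocks, Pc, fromBlocks_multiply, fromBlocks_multiply]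
  simp

lemma diag_mul_conj (m : ℕ) (g : Fin m → ℝ) :
    diagonal (fun i => (g i : ℂ)) * (diagonal (fun i => (g i : ℂ)))ᴴ =
      diagonal (fun i => ((g i * g i : ℝ) : ℂ)) := by
  rw [diagonal_conjTranspose, diagonal_mul_diagonal]
  funext i
  simp only [Pi.star_apply, Complex.star_def, Complex.conj_ofReal, Complex.ofReal_mul]

lemma rankL (m : ℕ) (hm : 1 ≤ m) :
    (fromBlocks (0 : Matrix (Fin m) (Fin m) ℂ) (0 : Matrix (Fin m) (Fin m) ℂ)
      ((C m).map Complex.ofRealHom) (0 : Matrix (Fin m) (Fin m) ℂ)).rank = 1 := by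
  set L := fromBlocks (0 : Matrix (Fin m) (Fin m) ℂ) (0 : Matrix (Fin m) (Fin m) ℂ)
      ((C m).map Complex.ofRealHom) (0 : Matrix (Fin m) (Fin m) ℂ) with hL
  have hLL : L * Lᴴ = diagonal (Sum.elim (fun _ : Fin m => (0 : ℂ))
      (fun i => ((γ m i * γ m i : ℝ) : ℂ))) := by
    rw [hL, fromBlocks_conjTranspose, fromBlocks_multiply, Cc_diag]
    rw [← fromBlocks_diagonal, ← diagonal_zero]
    simp [diag_mul_conj m (γ m), diagonal_zero]
  have h1 : L.rank = (L * Lᴴ).rank := (rank_self_mul_conjTranspose L).symm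
  rw [h1, hLL, rank_diagonal]
  refine (Fintype.card_congr (Equiv.subtypeEquivRight ?_)).trans
    (Fintype.card_subtype_eq (Sum.inr (⟨0, hm⟩ : Fin m)))
  intro x
  rcases x with a | b
  · simp
  · simp only [Sum.elim_inr, Sum.inr.injEq]
    constructor
    · intro h
      by_contra hb
      have hb0 : ¬ ((b : ℕ) = 0) := fun hc => hb (Fin.ext (by simpa using hc))
      have : γ m b = 0 := if_neg hb0
      rw [this] at h
      simp at h
    · intro h
      subst h
      have : γ m (⟨0, hm⟩ : Fin m) = sg ^ m + 1 := if_pos rfl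
      rw [this]
      have hpos : (0 : ℝ) < sg ^ m + 1 := add_pos (pow_pos sg_pos m) one_pos
      simp only [ne_eq, Complex.ofReal_eq_zero]
      nlinarith

lemma rankR (m : ℕ) :
    (fromBlocks (0 : Matrix (Fin m) (Fin m) ℂ) ((B m).map Complex.ofRealHom)
      (0 : Matrix (Fin m) (Fin m) ℂ) (0 : Matrix (Fin m) (Fin m) ℂ)).rank = m := by
  set R := fromBlocks (0 : Matrix (Fin m) (Fin m) ℂ) ((B m).map Complex.ofRealHom)
      (0 : Matrix (Fin m) (Fin m) ℂ) (0 : Matrix (Fin m) (Fin m) ℂ) with hR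
  have hRR : R * Rᴴ = diagonal (Sum.elim (fun i => ((β m i * β m i : ℝ) : ℂ))
      (fun _ : Fin m => (0 : ℂ))) := by
    rw [hR, fromBlocks_conjTranspose, fromBlocks_multiply, Bc_diag]
    rw [← fromBlocks_diagonal, ← diagonal_zero]
    simp [diag_mul_conj m (β m), diagonal_zero]
  have h1 : R.rank = (R * Rᴴ).rank := (rank_self_mul_conjTranspose R).symm
  rw [h1, hRR, rank_diagonal]
  apply card_left
  intro a
  have := β_pos m a
  simp only [ne_eq, Complex.ofReal_eq_zero]
  nlinarith

end NormalCornersAux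

end NormalCornersAux

open NormalCornersAux in
theorem exists_normal_incompatible_corners (m : ℕ) (hm : 1 ≤ m) :
    ∃ D P : Matrix (Fin (2 * m)) (Fin (2 * m)) ℂ,
      D * Dᴴ = Dᴴ * D ∧ P * P = P ∧ Pᴴ = P ∧ P.rank = m ∧
        ((1 - P) * D * P).rank = 1 ∧ (P * D * (1 - P)).rank = m := by
  have hmm : m + m = 2 * m := by omega
  let e : Fin m ⊕ Fin m ≃ Fin (2 * m) := finSumFinEquiv.trans (finCongr hmm)
  have hmul : ∀ M N : Matrix (Fin m ⊕ Fin m) (Fin m ⊕ Fin m) ℂ,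
      (reindex e e M) * (reindex e e N) = reindex e e (M * N) := by
    intro M N
    simp [reindex_apply, submatrix_mul_equiv]
  have hct : ∀ M : Matrix (Fin m ⊕ Fin m) (Fin m ⊕ Fin m) ℂ,
      (reindex e e M)ᴴ = reindex e e Mᴴ := by
    intro M
    simp [reindex_apply, conjTranspose_submatrix]
  have hone : (1 : Matrix (Fin (2 * m)) (Fin (2 * m)) ℂ) = reindex e e 1 := by
    simp [reindex_apply, submatrix_one_equiv]
  have hsub : ∀ M N : Matrix (Fin m ⊕ Fin m) (Fin m ⊕ Fin m) ℂ,
      reindex e e M - reindex e e N = reindex e e (M - N) := by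
    intro M N
    simp [reindex_apply, submatrix_sub]
  refine ⟨reindex e e (Dc m), reindex e e (Pc m), ?_, ?_, ?_, ?_, ?_, ?_⟩
  · rw [hct, hmul, hmul, normal_c]
  · rw [hmul, Pc_proj]
  · rw [hct, Pc_herm]
  · rw [rank_reindex, Pc_rank]
  · rw [hone, hsub, hmul, hmul, cornerL, rank_reindex, rankL m hm]
  · rw [hone, hsub, hmul, hmul, cornerR, rank_reindex, rankR]
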